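/- (Ky Fan minimum principle) Let A ∈ ℝ^{d×d} be symmetric with eigenvalues λ₁(A) ≥ ⋯ ≥ λ_d(A). For 1 ≤ p ≤ d, the minimum of tr(Pᵀ A P) over P ∈ ℝ^{d×p} with PᵀP = I_p equals λ_{d−p+1}(A) + ⋯ + λ_d(A). -/

import Mathlib

open Matrix

lemma kf_filter_eq_image (d p : ℕ) (hp : p ≤ d) :
    Finset.univ.filter (fun i : Fin d => d - p ≤ i.val) =
    Finset.univ.image (fun j : Fin p => (⟨d - p + j.val, Nat.lt_of_lt_of_le (Nat.add_lt_add_left j.isLt (d - p)) (by omega)⟩ : Fin d)) := by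
  ext i
  simp only [Finset.mem_filter, Finset.mem_image, Finset.mem_univ, true_and]
  constructor
  · intro h
    have hi := i.isLt
    exact ⟨⟨i.val - (d - p), by omega⟩, by ext; simp; omega⟩
  · rintro ⟨j, rfl⟩
    simp

lemma kf_inj (d p : ℕ) (hp : p ≤ d) :
    Function.Injective (fun j : Fin p => (⟨d - p + j.val, Nat.lt_of_lt_of_le (Nat.add_lt_add_left j.isLt (d - p)) (by omega)⟩ : Fin d)) := by
  intro a b h
  simp only [Fin.mk.injEq] at h
  exact Fin.ext (by omega)

lemma kf_key_ineq (d p : ℕ) (hp : p ≤ d) (μ s : Fin d → ℝ) (hμ : Antitone μ)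
    (h0 : ∀ i, 0 ≤ s i) (h1 : ∀ i, s i ≤ 1) (hsum : ∑ i, s i = (p : ℝ)) :
    ∑ j : Fin p, μ ⟨d - p + j.val, Nat.lt_of_lt_of_le (Nat.add_lt_add_left j.isLt (d - p)) (by omega)⟩ ≤ ∑ i, μ i * s i := by
  rcases Nat.eq_zero_or_pos p with hp0 | hp0
  · subst hp0
    have : ∀ i ∈ Finset.univ, s i = 0 :=
      (Finset.sum_eq_zero_iff_of_nonneg (fun i _ => h0 i)).1 (by simpa using hsum)
    rw [Finset.univ_eq_empty, Finset.sum_empty]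
    rw [Finset.sum_congr rfl (fun i hi => by rw [this i hi, mul_zero]), Finset.sum_const_zero]
  · set f : Fin p → Fin d := fun j => ⟨d - p + j.val, by have := j.isLt; omega⟩ with hf
    set χ : Fin d → ℝ := fun i => if d - p ≤ i.val then 1 else 0 with hχ
    have hLHS : ∑ j : Fin p, μ (f j) = ∑ i, μ i * χ i := by
      rw [show (∑ i, μ i * χ i) = ∑ i ∈ Finset.univ.filter (fun i : Fin d => d - p ≤ i.val), μ i by
        rw [Finset.sum_filter]; congr 1; ext i; simp [hχ, mul_ite, mul_one, mul_zero]]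
      rw [kf_filter_eq_image d p hp, Finset.sum_image (fun a _ b _ h => kf_inj d p hp h)]
    have hχsum : ∑ i, χ i = (p : ℝ) := by
      rw [show (∑ i, χ i) = ∑ i ∈ Finset.univ.filter (fun i : Fin d => d - p ≤ i.val), (1:ℝ) by
        rw [Finset.sum_filter]]
      rw [kf_filter_eq_image d p hp, Finset.sum_image (fun a _ b _ h => kf_inj d p hp h)]
      simp
    rw [hLHS, ← sub_nonneg, ← Finset.sum_sub_distrib]
    have hterm : ∀ i ∈ Finset.univ, μ ⟨d - p, by omega⟩ * (s i - χ i) ≤ μ i * s i - μ i * χ i := by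
      intro i _
      rw [← mul_sub]
      rcases le_or_gt (d - p) i.val with hc | hc
      · have hμle : μ i ≤ μ ⟨d - p, by omega⟩ := hμ (by simpa [Fin.le_def] using hc)
        have hχ1 : χ i = 1 := if_pos hc
        have : s i - χ i ≤ 0 := by rw [hχ1]; linarith [h1 i]
        nlinarith
      · have hμge : μ ⟨d - p, by omega⟩ ≤ μ i := hμ (by simp [Fin.le_def]; omega)
        have hχ0 : χ i = 0 := if_neg (by omega)
        have : 0 ≤ s i - χ i := by rw [hχ0]; linarith [h0 i]
        nlinarith
    calc (0:ℝ) = μ ⟨d - p, by omega⟩ * (∑ i, (s i - χ i)) := by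
          rw [Finset.sum_sub_distrib, hsum, hχsum, sub_self, mul_zero]
      _ = ∑ i, μ ⟨d - p, by omega⟩ * (s i - χ i) := by rw [Finset.mul_sum]
      _ ≤ ∑ i, (μ i * s i - μ i * χ i) := Finset.sum_le_sum hterm

/-- Ky Fan minimum principle: for a symmetric `A = V D(μ) Vᵀ` with `V`
orthogonal and eigenvalues `μ` listed in decreasing order, the minimum of
`tr(Pᵀ A P)` over `P` with `Pᵀ P = I_p` equals `μ_{d−p+1} + ⋯ + μ_d`. -/
theorem ky_fan_min_principle
    (d p : ℕ) (hp : p ≤ d)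
    (A V : Matrix (Fin d) (Fin d) ℝ) (μ : Fin d → ℝ)
    (hA : Aᵀ = A) (hV : Vᵀ * V = 1) (hμ : Antitone μ)
    (hdec : A = V * Matrix.diagonal μ * Vᵀ) :
    IsLeast {x | ∃ P : Matrix (Fin d) (Fin p) ℝ, Pᵀ * P = 1 ∧
        x = (Pᵀ * A * P).trace}
      (∑ i : Fin p, μ ⟨d - p + i.val, by have := i.isLt; omega⟩) := by
  have hVV' : V * Vᵀ = 1 := mul_eq_one_comm.mp hV
  set f : Fin p → Fin d := fun j => ⟨d - p + j.val, by have := j.isLt; omega⟩ with hf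
  constructor
  · -- membership : take P = columns of V indexed by f
    refine ⟨V.submatrix id f, ?_, ?_⟩
    · have : (V.submatrix id f)ᵀ * V.submatrix id f = (Vᵀ * V).submatrix f f := by
        rw [Matrix.transpose_submatrix, Matrix.submatrix_mul Vᵀ V f id f Function.bijective_id]
      rw [this, hV]
      ext i j
      simp [Matrix.one_apply, (show Function.Injective f from kf_inj d p hp).eq_iff]
    · have h1 : (V.submatrix id f)ᵀ * A * V.submatrix id f = (Vᵀ * (A * V)).submatrix f f := by
        rw [Matrix.transpose_submatrix,
          Matrix.submatrix_mul Vᵀ (A * V) f id f Function.bijective_id,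
          Matrix.submatrix_mul A V id id f Function.bijective_id,
          Matrix.submatrix_id_id, Matrix.mul_assoc]
      have h2 : Vᵀ * (A * V) = Matrix.diagonal μ := by
        rw [hdec]
        calc Vᵀ * (V * Matrix.diagonal μ * Vᵀ * V)
            = (Vᵀ * V) * Matrix.diagonal μ * (Vᵀ * V) := by
              simp only [Matrix.mul_assoc]
          _ = Matrix.diagonal μ := by rw [hV, Matrix.one_mul, Matrix.mul_one]
      rw [h1, h2]
      simp [Matrix.trace, Matrix.diag]; rfl
  · -- lower bound
    rintro x ⟨P, hP, rfl⟩
    set Q : Matrix (Fin d) (Fin p) ℝ := Vᵀ * P with hQdef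
    have hQ : Qᵀ * Q = 1 := by
      rw [hQdef, Matrix.transpose_mul, Matrix.transpose_transpose, Matrix.mul_assoc,
        ← Matrix.mul_assoc V, hVV', Matrix.one_mul, hP]
    have htr : (Pᵀ * A * P).trace = (Matrix.diagonal μ * (Q * Qᵀ)).trace := by
      have : Pᵀ * A * P = Qᵀ * Matrix.diagonal μ * Q := by
        rw [hdec, hQdef, Matrix.transpose_mul, Matrix.transpose_transpose]
        simp only [Matrix.mul_assoc]
      rw [this, Matrix.trace_mul_comm, ← Matrix.mul_assoc, Matrix.trace_mul_comm]
    set R : Matrix (Fin d) (Fin d) ℝ := Q * Qᵀ with hRdef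
    have hRsymm : Rᵀ = R := by rw [hRdef, Matrix.transpose_mul, Matrix.transpose_transpose]
    have hRidem : R * R = R := by
      rw [hRdef, Matrix.mul_assoc, ← Matrix.mul_assoc Qᵀ, hQ, Matrix.one_mul]
    have h0 : ∀ i, 0 ≤ R i i := by
      intro i
      have : R i i = ∑ j, Q i j ^ 2 := by
        simp [hRdef, Matrix.mul_apply, sq]
      rw [this]
      exact Finset.sum_nonneg fun j _ => sq_nonneg _
    have h1 : ∀ i, R i i ≤ 1 := by
      intro i
      have hterm : ∀ k, 0 ≤ R i k * R k i := fun k => by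
        rw [show R k i = R i k from congrFun (congrFun hRsymm i) k]
        exact mul_self_nonneg _
      have hsq : R i i ^ 2 ≤ R i i := by
        calc R i i ^ 2 = R i i * R i i := sq (R i i)
          _ ≤ ∑ k, R i k * R k i :=
              Finset.single_le_sum (f := fun k => R i k * R k i)
                (fun k _ => hterm k) (Finset.mem_univ i)
          _ = (R * R) i i := (Matrix.mul_apply).symm
          _ = R i i := by rw [hRidem]
      nlinarith
    have hsum : ∑ i, R i i = (p : ℝ) := by
      have : (R).trace = (Qᵀ * Q).trace := by rw [hRdef, Matrix.trace_mul_comm]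
      have h2 : (R).trace = (p : ℝ) := by rw [this, hQ, Matrix.trace_one]; simp
      simpa [Matrix.trace, Matrix.diag] using h2
    have hfinal : (Matrix.diagonal μ * R).trace = ∑ i, μ i * R i i := by
      simp [Matrix.trace, Matrix.diag, Matrix.diagonal_mul]
    rw [htr, hfinal]
    exact kf_key_ineq d p hp μ (fun i => R i i) hμ h0 h1 hsum
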